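/- For all v, w ∈ ℝ^d, the set H = {f ∈ L : f·A_v ⊆ A_w} is an R-submodule of L, H equals the k-linear span of the monomials x^m with m ∈ ℤ^d and m + ((C+v) ∩ ℤ^d) ⊆ C + w, and the map from H to Hom_R(A_v, A_w) sending f to the restriction to A_v of multiplication by f is an isomorphism of R-modules. In particular, every R-linear map A_v → A_w is multiplication by a unique element of this span. -/

import Mathlib

open Set

set_option synthInstance.maxHeartbeats 400000
set_option maxHeartbeats 1000000

noncomputable section

/-- The embedding of the lattice `ℤ^d` into `ℝ^d`. -/
def ιZ (d : ℕ) (m : Fin d → ℤ) : Fin d → ℝ := fun j => (m j : ℝ)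

/-- The lattice points of the translated cone `C + v`, where
`C = {x | ∀ i, 0 ≤ n i x}`. -/
def latticePts {d t : ℕ} (n : Fin t → ((Fin d → ℝ) →ₗ[ℝ] ℝ)) (v : Fin d → ℝ) :
    Set (Fin d → ℤ) :=
  {m | ∀ i, 0 ≤ n i (ιZ d m - v)}

/-- The toric algebra `R = k[C ∩ ℤ^d]`: the `k`-subalgebra of the Laurent
polynomial algebra `L = AddMonoidAlgebra k (Fin d → ℤ)` spanned (equivalently,
generated, since the monomial set is closed under multiplication and contains `1`)
by the monomials `x^m` with `m ∈ C ∩ ℤ^d`. -/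
def toricR (k : Type) [Field k] (d t : ℕ) (n : Fin t → ((Fin d → ℝ) →ₗ[ℝ] ℝ)) :
    Subalgebra k (AddMonoidAlgebra k (Fin d → ℤ)) :=
  Algebra.adjoin k
    {f | ∃ m : Fin d → ℤ, (∀ i, 0 ≤ n i (ιZ d m)) ∧ f = AddMonoidAlgebra.single m 1}

/-- The conic module `A_v`: the `R`-submodule of `L` spanned by the monomials `x^m`
with `m ∈ (C + v) ∩ ℤ^d`. -/
def conicA (k : Type) [Field k] (d t : ℕ) (n : Fin t → ((Fin d → ℝ) →ₗ[ℝ] ℝ))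
    (v : Fin d → ℝ) :
    Submodule ↥(toricR k d t n) (AddMonoidAlgebra k (Fin d → ℤ)) :=
  Submodule.span ↥(toricR k d t n)
    {f | ∃ m : Fin d → ℤ, (∀ i, 0 ≤ n i (ιZ d m - v)) ∧ f = AddMonoidAlgebra.single m 1}

namespace ToricAux

variable {d t : ℕ} {k : Type} [Field k]

lemma ιZ_add (a b : Fin d → ℤ) : ιZ d (a + b) = ιZ d a + ιZ d b := by
  funext j; simp [ιZ]

lemma ιZ_zero : ιZ d 0 = 0 := by funext j; simp [ιZ]

lemma ιZ_neg (a : Fin d → ℤ) : ιZ d (-a) = -ιZ d a := by funext j; simp [ιZ]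

lemma ιZ_sub (a b : Fin d → ℤ) : ιZ d (a - b) = ιZ d a - ιZ d b := by
  funext j; simp [ιZ]

lemma set_eq_image (P : (Fin d → ℤ) → Prop) :
    {f : AddMonoidAlgebra k (Fin d → ℤ) | ∃ m, P m ∧ f = AddMonoidAlgebra.single m 1}
      = (fun m => AddMonoidAlgebra.single m (1:k)) '' {m | P m} := by
  ext f; constructor
  · rintro ⟨m, hm, rfl⟩; exact ⟨m, hm, rfl⟩
  · rintro ⟨m, hm, rfl⟩; exact ⟨m, hm, rfl⟩

lemma mem_spanSingle {A : Set (Fin d → ℤ)} (f : AddMonoidAlgebra k (Fin d → ℤ)) :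
    f ∈ Submodule.span k ((fun m => AddMonoidAlgebra.single m (1:k)) '' A) ↔
      ↑f.coeff.support ⊆ A := by
  rw [← AddMonoidAlgebra.supported_eq_span_single]
  exact AddMonoidAlgebra.mem_supported

variable (n : Fin t → ((Fin d → ℝ) →ₗ[ℝ] ℝ))

lemma mem_toricR_iff (f : AddMonoidAlgebra k (Fin d → ℤ)) :
    f ∈ toricR k d t n ↔ ↑f.coeff.support ⊆ {m : Fin d → ℤ | ∀ i, 0 ≤ n i (ιZ d m)} := by
  classical
  constructor
  · intro hf
    let SA : Subalgebra k (AddMonoidAlgebra k (Fin d → ℤ)) :=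
      { carrier := {f | ↑f.coeff.support ⊆ {m : Fin d → ℤ | ∀ i, 0 ≤ n i (ιZ d m)}}
        mul_mem' := by
          intro a b ha hb x hx
          obtain ⟨p, hp, q, hq, rfl⟩ := Finset.mem_add.mp (AddMonoidAlgebra.support_coeff_mul_subset a b hx)
          intro i
          rw [ιZ_add, map_add]
          exact add_nonneg (ha hp i) (hb hq i)
        one_mem' := by
          intro x hx
          have := Finsupp.support_single_subset (a := (0 : Fin d → ℤ)) (b := (1:k)) hx
          simp only [Finset.mem_singleton] at this
          subst this
          intro i; rw [ιZ_zero, map_zero]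
        add_mem' := by
          intro a b ha hb x hx
          rcases Finset.mem_union.mp (Finsupp.support_add hx) with h | h
          exacts [ha h, hb h]
        zero_mem' := by simp
        algebraMap_mem' := by
          intro c x hx
          rw [Algebra.algebraMap_eq_smul_one] at hx
          have := Finsupp.support_smul (b := c) (g := (1 : AddMonoidAlgebra k (Fin d → ℤ)).coeff) hx
          have h2 := Finsupp.support_single_subset (a := (0 : Fin d → ℤ)) (b := (1:k)) this
          simp only [Finset.mem_singleton] at h2
          subst h2
          intro i; rw [ιZ_zero, map_zero] }
    have hle : toricR k d t n ≤ SA := by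
      apply Algebra.adjoin_le
      rintro f ⟨m, hm, rfl⟩
      intro x hx
      have := Finsupp.support_single_subset (a := m) (b := (1:k)) hx
      simp only [Finset.mem_singleton] at this
      subst this; exact hm
    exact hle hf
  · intro hf
    have h1 : f ∈ Submodule.span k
        ((fun m => AddMonoidAlgebra.single m (1:k)) '' {m | ∀ i, 0 ≤ n i (ιZ d m)}) :=
      (mem_spanSingle f).mpr hf
    have h2 : Submodule.span k
        ((fun m => AddMonoidAlgebra.single m (1:k)) '' {m | ∀ i, 0 ≤ n i (ιZ d m)}) ≤
        Subalgebra.toSubmodule (toricR k d t n) := by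
      rw [Submodule.span_le]
      rintro f ⟨m, hm, rfl⟩
      exact Algebra.subset_adjoin ⟨m, hm, rfl⟩
    exact h2 h1

lemma smul_eq (r : ↥(toricR k d t n)) (x : AddMonoidAlgebra k (Fin d → ℤ)) :
    r • x = ↑r * x := by rw [Algebra.smul_def]; rfl

lemma mem_conicA_iff (v : Fin d → ℝ) (f : AddMonoidAlgebra k (Fin d → ℤ)) :
    f ∈ conicA k d t n v ↔ ↑f.coeff.support ⊆ latticePts n v := by
  classical
  constructor
  · intro hf
    let P : Submodule ↥(toricR k d t n) (AddMonoidAlgebra k (Fin d → ℤ)) :=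
      { carrier := {f | ↑f.coeff.support ⊆ latticePts n v}
        add_mem' := by
          intro a b ha hb x hx
          rcases Finset.mem_union.mp (Finsupp.support_add hx) with h | h
          exacts [ha h, hb h]
        zero_mem' := by simp
        smul_mem' := by
          intro r f hf x hx
          rw [smul_eq] at hx
          obtain ⟨p, hp, q, hq, rfl⟩ :=
            Finset.mem_add.mp (AddMonoidAlgebra.support_coeff_mul_subset (r : AddMonoidAlgebra k (Fin d → ℤ)) f hx)
          have hrp := (mem_toricR_iff n (r : AddMonoidAlgebra k (Fin d → ℤ))).mp r.2 hp
          intro i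
          have : ιZ d (p + q) - v = ιZ d p + (ιZ d q - v) := by rw [ιZ_add]; abel
          rw [this, map_add]
          exact add_nonneg (hrp i) (hf hq i) }
    have hle : conicA k d t n v ≤ P := by
      rw [conicA, Submodule.span_le]
      rintro f ⟨m, hm, rfl⟩
      intro x hx
      have := Finsupp.support_single_subset (a := m) (b := (1:k)) hx
      simp only [Finset.mem_singleton] at this
      subst this; exact hm
    exact hle hf
  · intro hf
    have h1 : f ∈ Submodule.span k
        ((fun m => AddMonoidAlgebra.single m (1:k)) '' latticePts n v) :=
      (mem_spanSingle f).mpr hf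
    have h2 := Submodule.span_le_restrictScalars k ↥(toricR k d t n)
        ((fun m => AddMonoidAlgebra.single m (1:k)) '' latticePts n v)
    have h3 := h2 h1
    rw [Submodule.restrictScalars_mem] at h3
    rw [conicA, set_eq_image]
    exact h3

lemma support_shift (f : AddMonoidAlgebra k (Fin d → ℤ)) (q : Fin d → ℤ) :
    (f * AddMonoidAlgebra.single q (1:k)).coeff.support
      = f.coeff.support.map (addRightEmbedding q) :=
  AddMonoidAlgebra.support_coeff_mul_single f 1 (by simp) q

lemma exists_interior_pos (n : Fin t → ((Fin d → ℝ) →ₗ[ℝ] ℝ)) (hne : ∀ i, n i ≠ 0)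
    (C : Set (Fin d → ℝ)) (hC : C = {x | ∀ i, 0 ≤ n i x})
    (hfull : (interior C).Nonempty) :
    ∃ x0 : Fin d → ℝ, ∀ i, 0 < n i x0 := by
  obtain ⟨x0, hx0⟩ := hfull
  refine ⟨x0, fun i => ?_⟩
  have hx0C : x0 ∈ C := interior_subset hx0
  rw [hC] at hx0C
  rcases lt_or_eq_of_le (hx0C i) with h | h
  · exact h
  · exfalso
    obtain ⟨z, hz⟩ : ∃ z, n i z ≠ 0 := by
      by_contra hcon
      push_neg at hcon
      exact hne i (LinearMap.ext fun z => by simp [hcon z])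
    set dir : Fin d → ℝ := (-(n i z)⁻¹) • z with hdir
    have hdirval : n i dir = -1 := by
      rw [hdir, map_smul, smul_eq_mul]; field_simp
    have htend : Filter.Tendsto (fun δ : ℝ => x0 + δ • dir) (nhds 0) (nhds x0) := by
      have : Continuous (fun δ : ℝ => x0 + δ • dir) := by continuity
      have h0 : x0 + (0:ℝ) • dir = x0 := by simp
      simpa [h0] using this.tendsto 0
    have hev : ∀ᶠ δ in nhds (0:ℝ), x0 + δ • dir ∈ interior C :=
      htend.eventually (isOpen_interior.mem_nhds hx0)
    rw [Metric.eventually_nhds_iff] at hev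
    obtain ⟨ε, hε, hball⟩ := hev
    have hmem : x0 + (ε/2) • dir ∈ C := by
      apply interior_subset
      apply hball
      rw [Real.dist_eq, sub_zero, abs_of_pos (by linarith)]
      linarith
    rw [hC] at hmem
    have := hmem i
    rw [map_add, map_smul, ← h, hdirval] at this
    simp at this
    linarith

lemma bound_abs (g : (Fin d → ℝ) →ₗ[ℝ] ℝ) (y : Fin d → ℝ) (hy : ∀ j, |y j| ≤ 1) :
    |g y| ≤ ∑ j, |g (fun j' => if j = j' then 1 else 0)| := by
  rw [LinearMap.pi_apply_eq_sum_univ g y]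
  refine le_trans (Finset.abs_sum_le_sum_abs _ _) ?_
  apply Finset.sum_le_sum
  intro j _
  rw [smul_eq_mul, abs_mul]
  calc |y j| * |g fun j' => if j = j' then 1 else 0|
      ≤ 1 * |g fun j' => if j = j' then 1 else 0| := by
        apply mul_le_mul_of_nonneg_right (hy j) (abs_nonneg _)
    _ = _ := one_mul _

lemma exists_deep (n : Fin t → ((Fin d → ℝ) →ₗ[ℝ] ℝ)) (x0 : Fin d → ℝ)
    (hx0 : ∀ i, 0 < n i x0) (B : Fin t → ℝ) :
    ∃ u : Fin d → ℤ, ∀ i, B i ≤ n i (ιZ d u) := by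
  set M : Fin t → ℝ := fun i => ∑ j, |n i (fun j' => if j = j' then 1 else 0)| with hM
  obtain ⟨b, hb⟩ := Finset.exists_le (Finset.univ.image fun i => (B i + M i) / n i x0)
  obtain ⟨N, hN⟩ := exists_nat_ge b
  have hNi : ∀ i, B i + M i ≤ N * n i x0 := by
    intro i
    have h1 : (B i + M i) / n i x0 ≤ b :=
      hb _ (Finset.mem_image_of_mem _ (Finset.mem_univ i))
    rw [div_le_iff₀ (hx0 i)] at h1
    calc B i + M i ≤ b * n i x0 := h1
      _ ≤ N * n i x0 := mul_le_mul_of_nonneg_right hN (le_of_lt (hx0 i))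
  refine ⟨fun j => ⌊(N:ℝ) * x0 j⌋, fun i => ?_⟩
  set u : Fin d → ℤ := fun j => ⌊(N:ℝ) * x0 j⌋ with hu
  have hyd : ∀ j, |ιZ d u j - ((N:ℝ) • x0) j| ≤ 1 := by
    intro j
    have h1 := Int.floor_le ((N:ℝ) * x0 j)
    have h2 := Int.lt_floor_add_one ((N:ℝ) * x0 j)
    rw [abs_le]
    constructor <;> simp [ιZ, hu, smul_eq_mul] <;> linarith
  have hsplit : ιZ d u = (N:ℝ) • x0 + (ιZ d u - (N:ℝ) • x0) := by abel
  rw [hsplit, map_add, map_smul, smul_eq_mul]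
  have hbd := bound_abs (n i) (ιZ d u - (N:ℝ) • x0) (fun j => by simpa using hyd j)
  have := hNi i
  have habs := abs_le.mp hbd
  simp only [hM] at this
  linarith [habs.1]


end ToricAux


namespace ToricAux

variable {d t : ℕ} {k : Type} [Field k]
variable (n : Fin t → ((Fin d → ℝ) →ₗ[ℝ] ℝ))

lemma single_mem_conicA {v : Fin d → ℝ} {q : Fin d → ℤ} (hq : q ∈ latticePts n v) :
    AddMonoidAlgebra.single q (1:k) ∈ conicA k d t n v :=
  Submodule.subset_span ⟨q, hq, rfl⟩

def Hmod (k : Type) [Field k] (d t : ℕ) (n : Fin t → ((Fin d → ℝ) →ₗ[ℝ] ℝ))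
    (v w : Fin d → ℝ) :
    Submodule ↥(toricR k d t n) (AddMonoidAlgebra k (Fin d → ℤ)) where
  carrier := {f | ∀ a ∈ conicA k d t n v, f * a ∈ conicA k d t n w}
  add_mem' := by
    intro f g hf hg a ha
    rw [add_mul]
    exact add_mem (hf a ha) (hg a ha)
  zero_mem' := by
    intro a ha
    rw [zero_mul]
    exact zero_mem _
  smul_mem' := by
    intro r f hf a ha
    have h : (r • f) * a = r • (f * a) := by rw [smul_eq n, smul_eq n]; ring
    rw [h]
    exact Submodule.smul_mem _ _ (hf a ha)

lemma mem_Hmod_iff (v w : Fin d → ℝ) (f : AddMonoidAlgebra k (Fin d → ℤ)) :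
    f ∈ Hmod k d t n v w ↔
      ↑f.coeff.support ⊆ {m : Fin d → ℤ | ∀ q ∈ latticePts n v, m + q ∈ latticePts n w} := by
  constructor
  · intro hf m hm q hq
    have h1 := hf _ (single_mem_conicA n hq)
    rw [mem_conicA_iff] at h1
    apply h1
    rw [support_shift]
    exact Finset.mem_map.mpr ⟨m, hm, rfl⟩
  · intro hf a ha
    have ha' : a ∈ Submodule.span ↥(toricR k d t n)
        {f | ∃ m : Fin d → ℤ, (∀ i, 0 ≤ n i (ιZ d m - v)) ∧
          f = AddMonoidAlgebra.single m 1} := ha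
    clear ha
    induction ha' using Submodule.span_induction with
    | mem x hx =>
      obtain ⟨q, hq, rfl⟩ := hx
      rw [mem_conicA_iff]
      intro x hx
      rw [support_shift] at hx
      obtain ⟨m, hm, rfl⟩ := Finset.mem_map.mp hx
      exact hf hm q hq
    | zero => rw [mul_zero]; exact zero_mem _
    | add x y hx hy ihx ihy => rw [mul_add]; exact add_mem ihx ihy
    | smul r x hx ih =>
      have h : f * (r • x) = r • (f * x) := by rw [smul_eq n, smul_eq n]; ring
      rw [h]
      exact Submodule.smul_mem _ _ ih

lemma image_cond_iff (v w : Fin d → ℝ) (m : Fin d → ℤ) :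
    ((fun m' => m + m') '' latticePts n v ⊆ latticePts n w) ↔
      ∀ q ∈ latticePts n v, m + q ∈ latticePts n w := by
  rw [Set.image_subset_iff]
  rfl

lemma Hmod_eq_span (v w : Fin d → ℝ) :
    Hmod k d t n v w = Submodule.span ↥(toricR k d t n)
      {f | ∃ m : Fin d → ℤ,
        ((fun m' => m + m') '' latticePts n v ⊆ latticePts n w) ∧
        f = AddMonoidAlgebra.single m 1} := by
  apply le_antisymm
  · intro f hf
    rw [mem_Hmod_iff] at hf
    rw [set_eq_image]
    have h1 : f ∈ Submodule.span k ((fun m => AddMonoidAlgebra.single m (1:k)) ''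
        {m | (fun m' => m + m') '' latticePts n v ⊆ latticePts n w}) := by
      rw [mem_spanSingle]
      intro m hm
      rw [Set.mem_setOf_eq, image_cond_iff]
      exact hf hm
    exact Submodule.span_le_restrictScalars k _ _ h1
  · rw [Submodule.span_le]
    rintro f ⟨m, hm, rfl⟩
    rw [SetLike.mem_coe, mem_Hmod_iff]
    intro x hx
    have := Finsupp.support_single_subset (a := m) (b := (1:k)) hx
    simp only [Finset.mem_singleton] at this
    subst this
    exact (image_cond_iff n v w _).mp hm

def toHom (v w : Fin d → ℝ) :
    ↥(Hmod k d t n v w) →ₗ[↥(toricR k d t n)]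
      (↥(conicA k d t n v) →ₗ[↥(toricR k d t n)] ↥(conicA k d t n w)) where
  toFun f :=
    { toFun := fun a => ⟨(f : AddMonoidAlgebra k (Fin d → ℤ)) * (a : AddMonoidAlgebra k (Fin d → ℤ)), f.2 (a : AddMonoidAlgebra k (Fin d → ℤ)) a.2⟩
      map_add' := fun a b => Subtype.ext (by simp [mul_add])
      map_smul' := fun r a => Subtype.ext (by simp [mul_smul_comm]) }
  map_add' f g := LinearMap.ext fun a => Subtype.ext (by simp [add_mul])
  map_smul' r f := LinearMap.ext fun a => Subtype.ext (by simp [smul_mul_assoc])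

lemma exists_lattice (x0 : Fin d → ℝ) (hx0 : ∀ i, 0 < n i x0) (v : Fin d → ℝ) :
    ∃ p0, p0 ∈ latticePts n v := by
  obtain ⟨u, hu⟩ := exists_deep n x0 hx0 (fun i => n i v)
  refine ⟨u, fun i => ?_⟩
  rw [map_sub]
  linarith [hu i]

lemma key_step (x0 : Fin d → ℝ) (hx0 : ∀ i, 0 < n i x0) (v w : Fin d → ℝ)
    (φ : ↥(conicA k d t n v) →ₗ[↥(toricR k d t n)] ↥(conicA k d t n w))
    (p0 : Fin d → ℤ) (hp0 : p0 ∈ latticePts n v)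
    (q : Fin d → ℤ) (hq : q ∈ latticePts n v) :
    ((φ ⟨AddMonoidAlgebra.single p0 1, single_mem_conicA n hp0⟩ :
        ↥(conicA k d t n w)) : AddMonoidAlgebra k (Fin d → ℤ))
      * AddMonoidAlgebra.single (-p0) 1 * AddMonoidAlgebra.single q 1
    = ((φ ⟨AddMonoidAlgebra.single q 1, single_mem_conicA n hq⟩ :
        ↥(conicA k d t n w)) : AddMonoidAlgebra k (Fin d → ℤ)) := by
  obtain ⟨u, hu⟩ := exists_deep n x0 hx0 (fun i => max 0 (n i (ιZ d p0 - ιZ d q)))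
  have hu1 : ∀ i, 0 ≤ n i (ιZ d u) := fun i => le_trans (le_max_left _ _) (hu i)
  have hu2 : ∀ i, 0 ≤ n i (ιZ d (u + q - p0)) := by
    intro i
    have h1 : n i (ιZ d p0 - ιZ d q) ≤ n i (ιZ d u) := le_trans (le_max_right _ _) (hu i)
    have h2 : ιZ d (u + q - p0) = ιZ d u - (ιZ d p0 - ιZ d q) := by
      rw [ιZ_sub, ιZ_add]; abel
    rw [h2, map_sub]
    linarith
  set r1 : ↥(toricR k d t n) :=
    ⟨AddMonoidAlgebra.single u 1, Algebra.subset_adjoin ⟨u, hu1, rfl⟩⟩ with hr1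
  set r2 : ↥(toricR k d t n) :=
    ⟨AddMonoidAlgebra.single (u + q - p0) 1, Algebra.subset_adjoin ⟨_, hu2, rfl⟩⟩ with hr2
  set sp0 : ↥(conicA k d t n v) :=
    ⟨AddMonoidAlgebra.single p0 1, single_mem_conicA n hp0⟩ with hsp0
  set sq : ↥(conicA k d t n v) :=
    ⟨AddMonoidAlgebra.single q 1, single_mem_conicA n hq⟩ with hsq
  have e1 : r2 • sp0 = r1 • sq := by
    apply Subtype.ext
    rw [Submodule.coe_smul, Submodule.coe_smul, smul_eq n, smul_eq n, hsp0, hsq, hr1, hr2]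
    show AddMonoidAlgebra.single (u + q - p0) (1:k) * AddMonoidAlgebra.single p0 1
      = AddMonoidAlgebra.single u 1 * AddMonoidAlgebra.single q 1
    rw [AddMonoidAlgebra.single_mul_single, AddMonoidAlgebra.single_mul_single, one_mul]
    congr 1
    abel
  have e2 : r2 • φ sp0 = r1 • φ sq := by rw [← map_smul, ← map_smul, e1]
  set Fp0 : AddMonoidAlgebra k (Fin d → ℤ) := ↑(φ sp0) with hFp0
  set Fq : AddMonoidAlgebra k (Fin d → ℤ) := ↑(φ sq) with hFq
  have e4 : AddMonoidAlgebra.single (u + q - p0) (1:k) * Fp0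
      = AddMonoidAlgebra.single u 1 * Fq := by
    have h5 := congrArg (Subtype.val) e2
    rw [Submodule.coe_smul, Submodule.coe_smul, smul_eq n, smul_eq n] at h5
    exact h5
  calc Fp0 * AddMonoidAlgebra.single (-p0) 1 * AddMonoidAlgebra.single q 1
      = AddMonoidAlgebra.single (-p0 + q) (1:k) * Fp0 := by
        rw [mul_assoc, AddMonoidAlgebra.single_mul_single, one_mul, mul_comm]
    _ = AddMonoidAlgebra.single (-u) (1:k) *
          (AddMonoidAlgebra.single (u + q - p0) 1 * Fp0) := by
        rw [← mul_assoc, AddMonoidAlgebra.single_mul_single, one_mul]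
        congr 2
        abel
    _ = AddMonoidAlgebra.single (-u) (1:k) *
          (AddMonoidAlgebra.single u 1 * Fq) := by rw [e4]
    _ = Fq := by
        rw [← mul_assoc, AddMonoidAlgebra.single_mul_single, one_mul,
          show (-u) + u = 0 by abel, ← AddMonoidAlgebra.one_def, one_mul]

lemma key (x0 : Fin d → ℝ) (hx0 : ∀ i, 0 < n i x0) (v w : Fin d → ℝ)
    (φ : ↥(conicA k d t n v) →ₗ[↥(toricR k d t n)] ↥(conicA k d t n w)) :
    ∃ f : AddMonoidAlgebra k (Fin d → ℤ),
      ∀ (a : AddMonoidAlgebra k (Fin d → ℤ)) (ha : a ∈ conicA k d t n v),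
        ((φ ⟨a, ha⟩ : ↥(conicA k d t n w)) : AddMonoidAlgebra k (Fin d → ℤ)) = f * a := by
  obtain ⟨p0, hp0⟩ := exists_lattice n x0 hx0 v
  refine ⟨(↑(φ ⟨AddMonoidAlgebra.single p0 1, single_mem_conicA n hp0⟩) :
      AddMonoidAlgebra k (Fin d → ℤ)) * AddMonoidAlgebra.single (-p0) 1, ?_⟩
  intro a ha
  refine Submodule.span_induction
    (p := fun x hx =>
      ((φ ⟨x, hx⟩ : ↥(conicA k d t n w)) : AddMonoidAlgebra k (Fin d → ℤ)) =
        (↑(φ ⟨AddMonoidAlgebra.single p0 1, single_mem_conicA n hp0⟩) :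
          AddMonoidAlgebra k (Fin d → ℤ)) * AddMonoidAlgebra.single (-p0) 1 * x)
    ?_ ?_ ?_ ?_ ha
  · rintro x ⟨q, hq, rfl⟩
    exact (key_step n x0 hx0 v w φ p0 hp0 q hq).symm
  · rw [show (⟨0, Submodule.zero_mem _⟩ : ↥(conicA k d t n v)) = 0 from rfl, map_zero,
      mul_zero]
    rfl
  · intro x y hx hy ihx ihy
    rw [show (⟨x + y, Submodule.add_mem _ hx hy⟩ : ↥(conicA k d t n v))
        = ⟨x, hx⟩ + ⟨y, hy⟩ from rfl, map_add, Submodule.coe_add, ihx, ihy, mul_add]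
  · intro r x hx ih
    rw [show (⟨r • x, Submodule.smul_mem _ r hx⟩ : ↥(conicA k d t n v))
        = r • ⟨x, hx⟩ from rfl, map_smul, Submodule.coe_smul, ih, smul_eq n, smul_eq n]
    ring


end ToricAux


/-- `H = {f ∈ L : f · A_v ⊆ A_w}` is an `R`-submodule of `L`, equal to
the span of the monomials `x^m` with `m + ((C+v) ∩ ℤ^d) ⊆ C + w`, and `f ↦ (a ↦ f*a)`
is an `R`-module isomorphism `H ≃ Hom_R(A_v, A_w)`; in particular every `R`-linear
map `A_v → A_w` is multiplication by a unique element of this span. -/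
theorem stmt_1
    (d t : ℕ) (hd : 1 ≤ d)
    (n : Fin t → ((Fin d → ℝ) →ₗ[ℝ] ℝ))
    (hne : ∀ i, n i ≠ 0)
    (hint : ∀ i (m : Fin d → ℤ), ∃ z : ℤ, n i (ιZ d m) = z)
    (hprim : ∀ i (z : ℤ), ∃ m : Fin d → ℤ, n i (ιZ d m) = z)
    (C : Set (Fin d → ℝ)) (hC : C = {x | ∀ i, 0 ≤ n i x})
    (hfull : (interior C).Nonempty)
    (hpointed : Submodule.span ℝ (Set.range n) = ⊤)
    (hirr : ∀ i, C ⊂ {x | ∀ j, j ≠ i → 0 ≤ n j x})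
    (k : Type) [Field k] :
    ∀ v w : Fin d → ℝ,
      ∃ H : Submodule ↥(toricR k d t n) (AddMonoidAlgebra k (Fin d → ℤ)),
        (H : Set (AddMonoidAlgebra k (Fin d → ℤ))) =
          {f | ∀ a ∈ conicA k d t n v, f * a ∈ conicA k d t n w} ∧
        H = Submodule.span ↥(toricR k d t n)
          {f | ∃ m : Fin d → ℤ,
            ((fun m' => m + m') '' latticePts n v ⊆ latticePts n w) ∧
            f = AddMonoidAlgebra.single m 1} ∧
        (∃ e : ↥H ≃ₗ[↥(toricR k d t n)]
            (↥(conicA k d t n v) →ₗ[↥(toricR k d t n)] ↥(conicA k d t n w)),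
          ∀ (f : ↥H) (a : ↥(conicA k d t n v)),
            ((e f) a : AddMonoidAlgebra k (Fin d → ℤ)) =
              (f : AddMonoidAlgebra k (Fin d → ℤ)) * (a : AddMonoidAlgebra k (Fin d → ℤ))) ∧
        (∀ φ : ↥(conicA k d t n v) →ₗ[↥(toricR k d t n)] ↥(conicA k d t n w),
          ∃! f : AddMonoidAlgebra k (Fin d → ℤ),
            f ∈ Submodule.span ↥(toricR k d t n)
              {g | ∃ m : Fin d → ℤ,
                ((fun m' => m + m') '' latticePts n v ⊆ latticePts n w) ∧
                g = AddMonoidAlgebra.single m 1} ∧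
            ∀ a : ↥(conicA k d t n v),
              (φ a : AddMonoidAlgebra k (Fin d → ℤ)) =
                f * (a : AddMonoidAlgebra k (Fin d → ℤ))) := by
  intro v w
  obtain ⟨x0, hx0⟩ := ToricAux.exists_interior_pos n hne C hC hfull
  obtain ⟨p0, hp0⟩ := ToricAux.exists_lattice n x0 hx0 v
  have hne0 : (AddMonoidAlgebra.single p0 1 : AddMonoidAlgebra k (Fin d → ℤ)) ≠ 0 :=
    fun h => one_ne_zero (AddMonoidAlgebra.single_eq_zero.mp h)
  have hinj : Function.Injective (ToricAux.toHom n v w (k := k)) := by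
    intro f g hfg
    have h1 := congrArg (fun ψ : ↥(conicA k d t n v) →ₗ[↥(toricR k d t n)] ↥(conicA k d t n w) =>
      ((ψ ⟨AddMonoidAlgebra.single p0 1, ToricAux.single_mem_conicA n hp0⟩ : _) :
        AddMonoidAlgebra k (Fin d → ℤ))) hfg
    exact Subtype.ext (mul_right_cancel₀ hne0 h1)
  have hsurj : Function.Surjective (ToricAux.toHom n v w (k := k)) := by
    intro φ
    obtain ⟨f, hfprop⟩ := ToricAux.key n x0 hx0 v w φ
    have hfH : f ∈ ToricAux.Hmod k d t n v w := by
      intro a ha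
      rw [← hfprop a ha]
      exact (φ ⟨a, ha⟩).2
    refine ⟨⟨f, hfH⟩, ?_⟩
    apply LinearMap.ext
    intro a
    exact Subtype.ext (hfprop (↑a) a.2).symm
  refine ⟨ToricAux.Hmod k d t n v w, rfl, ToricAux.Hmod_eq_span n v w,
    ⟨LinearEquiv.ofBijective _ ⟨hinj, hsurj⟩, fun f a => rfl⟩, ?_⟩
  intro φ
  obtain ⟨f, hfprop⟩ := ToricAux.key n x0 hx0 v w φ
  have hfH : f ∈ ToricAux.Hmod k d t n v w := by
    intro a ha
    rw [← hfprop a ha]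
    exact (φ ⟨a, ha⟩).2
  refine ⟨f, ⟨?_, ?_⟩, ?_⟩
  · rw [← ToricAux.Hmod_eq_span n v w]
    exact hfH
  · intro a
    exact hfprop (↑a) a.2
  · intro g hg
    have h1 := hg.2 ⟨AddMonoidAlgebra.single p0 1, ToricAux.single_mem_conicA n hp0⟩
    have h2 := hfprop (AddMonoidAlgebra.single p0 1) (ToricAux.single_mem_conicA n hp0)
    apply mul_right_cancel₀ hne0
    exact h1.symm.trans h2
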